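/- Let 0<b<1, σ₁,σ₂ ∈ ℝ, and for s∈(1/2,1) let α₂(s) := (C(s)s²/(4(1-s)))[σ₁ b^{1-2s} + σ₂ (1-b)^{1-2s}](1 + Γ(2s-1)Γ(3-2s)), where C(s)=2^{2s}sΓ(s+1/2)/(√π Γ(1-s)). Then α₂(s) → σ₁/b + σ₂/(1-b) as s → 1⁻, and moreover |α₂(s) - (σ₁/b + σ₂/(1-b))| ≲ 1-s for s close to 1. -/

import Mathlib

open MeasureTheory Set Real Filter Topology

noncomputable section

/-- Normalization constant of the 1D integral fractional Laplacian. -/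
def Cs (s : ℝ) : ℝ :=
  (2:ℝ)^(2*s) * s * Real.Gamma (s + 1/2) / (Real.sqrt π * Real.Gamma (1 - s))

/-- The interior contribution `α₂(s)` of the Gagliardo energy of `φ^s`. -/
def alpha2 (b σ₁ σ₂ : ℝ) (s : ℝ) : ℝ :=
  (Cs s * s^2 / (4 * (1 - s))) *
    (σ₁ * b ^ (1 - 2*s) + σ₂ * (1 - b) ^ (1 - 2*s)) *
    (1 + Real.Gamma (2*s - 1) * Real.Gamma (3 - 2*s))

/-- `α₂(s) → σ₁/b + σ₂/(1-b)` as `s → 1⁻`, with linear rate `O(1-s)`. -/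
theorem stmt10 (b σ₁ σ₂ : ℝ) (hb : b ∈ Ioo (0:ℝ) 1) :
    Tendsto (alpha2 b σ₁ σ₂) (𝓝[<] (1:ℝ))
      (𝓝 (σ₁ / b + σ₂ / (1 - b))) ∧
    ∃ C > 0, ∃ s₀ ∈ Ioo (1/2 : ℝ) 1, ∀ s ∈ Ioo s₀ 1,
      |alpha2 b σ₁ σ₂ s - (σ₁ / b + σ₂ / (1 - b))| ≤ C * (1 - s) := by
  obtain ⟨hb0, hb1⟩ := hb
  have hb1' : (0:ℝ) < 1 - b := by linarith
  have hπ : Real.sqrt π ≠ 0 := ne_of_gt (Real.sqrt_pos.mpr Real.pi_pos)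
  set L := σ₁ / b + σ₂ / (1 - b) with hL
  set F : ℝ → ℝ := fun s =>
    ((2:ℝ)^(2*s) * s * Real.Gamma (s+1/2) * s^2 / (4 * (Real.sqrt π * Real.Gamma (2 - s)))) *
    (σ₁ * b ^ (1-2*s) + σ₂ * (1-b)^(1-2*s)) *
    (1 + Real.Gamma (2*s-1) * Real.Gamma (3-2*s)) with hFdef
  -- alpha2 = F on (1/2, 1)
  have heq : ∀ s ∈ Ioo (1/2:ℝ) 1, alpha2 b σ₁ σ₂ s = F s := by
    intro s hs
    have h1s : (0:ℝ) < 1 - s := by linarith [hs.2]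
    have hΓ : Real.Gamma (1 - s) ≠ 0 := ne_of_gt (Real.Gamma_pos_of_pos h1s)
    have h2 : Real.Gamma (2 - s) = (1 - s) * Real.Gamma (1 - s) := by
      have h := Real.Gamma_add_one (s := 1 - s) (by linarith)
      rw [show (1:ℝ) - s + 1 = 2 - s by ring] at h
      exact h
    have key : Cs s * s^2 / (4 * (1 - s)) =
        (2:ℝ)^(2*s) * s * Real.Gamma (s+1/2) * s^2 / (4 * (Real.sqrt π * Real.Gamma (2 - s))) := by
      rw [Cs, h2]
      field_simp
      try tauto
    simp only [hFdef, alpha2, key]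
  -- differentiability of Gamma at positive points
  have hΓdiff : ∀ x : ℝ, 0 < x → DifferentiableAt ℝ Real.Gamma x := by
    intro x hx
    refine Real.differentiableAt_Gamma fun n => ?_
    have : (0:ℝ) ≤ n := n.cast_nonneg
    intro h; rw [h] at hx; linarith
  -- F is differentiable at 1
  have hdF : DifferentiableAt ℝ F 1 := by
    have d1 : DifferentiableAt ℝ (fun s : ℝ => (2:ℝ)^(2*s)) 1 :=
      (differentiableAt_const _).rpow ((differentiableAt_const _).mul differentiableAt_fun_id)
        (by norm_num)
    have d2 : DifferentiableAt ℝ (fun s : ℝ => Real.Gamma (s + 1/2)) 1 := by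
      have hg : DifferentiableAt ℝ (fun s : ℝ => s + 1/2) 1 := by fun_prop
      have h' := DifferentiableAt.comp (g := Real.Gamma) (f := fun s : ℝ => s + 1/2) 1
        (hΓdiff _ (by norm_num)) hg
      exact h'
    have d3 : DifferentiableAt ℝ (fun s : ℝ => Real.Gamma (2 - s)) 1 := by
      have hg : DifferentiableAt ℝ (fun s : ℝ => 2 - s) 1 := by fun_prop
      have h' := DifferentiableAt.comp (g := Real.Gamma) (f := fun s : ℝ => 2 - s) 1
        (hΓdiff _ (by norm_num)) hg
      exact h'
    have d4 : DifferentiableAt ℝ (fun s : ℝ => Real.Gamma (2*s - 1)) 1 := by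
      have hg : DifferentiableAt ℝ (fun s : ℝ => 2*s - 1) 1 := by fun_prop
      have h' := DifferentiableAt.comp (g := Real.Gamma) (f := fun s : ℝ => 2*s - 1) 1
        (hΓdiff _ (by norm_num)) hg
      exact h'
    have d5 : DifferentiableAt ℝ (fun s : ℝ => Real.Gamma (3 - 2*s)) 1 := by
      have hg : DifferentiableAt ℝ (fun s : ℝ => 3 - 2*s) 1 := by fun_prop
      have h' := DifferentiableAt.comp (g := Real.Gamma) (f := fun s : ℝ => 3 - 2*s) 1
        (hΓdiff _ (by norm_num)) hg
      exact h'
    have db : DifferentiableAt ℝ (fun s : ℝ => b ^ (1 - 2*s)) 1 :=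
      (differentiableAt_const _).rpow
        ((differentiableAt_const _).sub ((differentiableAt_const _).mul differentiableAt_fun_id))
        (ne_of_gt hb0)
    have db' : DifferentiableAt ℝ (fun s : ℝ => (1 - b) ^ (1 - 2*s)) 1 :=
      (differentiableAt_const _).rpow
        ((differentiableAt_const _).sub ((differentiableAt_const _).mul differentiableAt_fun_id))
        (ne_of_gt hb1')
    have hden : (4:ℝ) * (Real.sqrt π * Real.Gamma (2 - 1)) ≠ 0 := by
      rw [show (2:ℝ) - 1 = 1 by norm_num, Real.Gamma_one]
      simp [hπ]
    exact ((((((d1.mul differentiableAt_fun_id).mul d2).mul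
        (differentiableAt_fun_id.pow 2)).div ((differentiableAt_const _).mul ((differentiableAt_const _).mul d3)) hden).mul
        (((differentiableAt_const _).mul db).add ((differentiableAt_const _).mul db'))).mul
        ((differentiableAt_const _).add (d4.mul d5)))
  -- value at 1
  have h4 : (2:ℝ) ^ ((2:ℝ) * 1) = 4 := by
    rw [show (2:ℝ) * 1 = ((2:ℕ):ℝ) by norm_num, Real.rpow_natCast]; norm_num
  have hΓ32 : Real.Gamma ((1:ℝ) + 1/2) = Real.sqrt π / 2 := by
    rw [show (1:ℝ) + 1/2 = 1/2 + 1 by ring, Real.Gamma_add_one (by norm_num),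
      Real.Gamma_one_half_eq]
    ring
  have hF1 : F 1 = L := by
    have e1 : (1:ℝ) - 2*1 = -1 := by norm_num
    simp only [hFdef, hL, h4, hΓ32, e1, Real.rpow_neg_one,
      show (2:ℝ) - 1 = 1 by norm_num, show (2:ℝ)*1 - 1 = 1 by norm_num,
      show (3:ℝ) - 2*1 = 1 by norm_num, Real.Gamma_one]
    field_simp
    ring
  have hcont : ContinuousAt F 1 := hdF.continuousAt
  constructor
  · have ht : Tendsto F (𝓝[<] (1:ℝ)) (𝓝 L) := by
      rw [← hF1]
      exact hcont.continuousWithinAt.tendsto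
    refine ht.congr' ?_
    filter_upwards [Ioo_mem_nhdsLT_of_mem (by norm_num : (1:ℝ) ∈ Ioc (1/2 : ℝ) 1)] with s hs
    exact (heq s hs).symm
  · -- quantitative bound
    have hO : (fun s => F s - F 1) =O[𝓝 (1:ℝ)] (fun s => s - 1) := hdF.isBigO_sub
    obtain ⟨C, hCpos, hC⟩ := hO.exists_pos
    have hC' : ∀ᶠ s in 𝓝 (1:ℝ), |F s - F 1| ≤ C * |s - 1| := by
      have := hC.bound
      filter_upwards [this] with s hs
      simpa [Real.norm_eq_abs] using hs
    rw [Metric.eventually_nhds_iff] at hC'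
    obtain ⟨ε, hε, hball⟩ := hC'
    refine ⟨C, hCpos, max (3/4) (1 - ε/2), ?_, ?_⟩
    · constructor
      · have : (1/2:ℝ) < 3/4 := by norm_num
        exact lt_of_lt_of_le this (le_max_left _ _)
      · apply max_lt (by norm_num) (by linarith)
    · intro s hs
      obtain ⟨hs1, hs2⟩ := hs
      have hs3 : (3/4:ℝ) < s := lt_of_le_of_lt (le_max_left _ _) hs1
      have hs4 : 1 - ε/2 < s := lt_of_le_of_lt (le_max_right _ _) hs1
      have hdist : dist s 1 < ε := by
        rw [Real.dist_eq, abs_of_nonpos (by linarith)]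
        linarith
      have hb2 := hball hdist
      rw [heq s ⟨by linarith, hs2⟩, hF1] at *
      calc |F s - L| ≤ C * |s - 1| := by rw [← hF1]; exact hball hdist
        _ = C * (1 - s) := by rw [abs_of_nonpos (by linarith)]; ring
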